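/- arXiv:2012.00347 — 2 statements merged into one kernel-verified Lean document; each statement's English description precedes it below -/
import Mathlib

section
/- Let λ_p > 0 and d₂ > 0 satisfy λ_p d₂ ≥ 1, and set λ₂ = (1 − e^{−2 λ_p d₂})/(2 d₂). Then 2 − (2 − λ₂d₂)²/2 ≥ 2 − (3 + e^{−2})²/8, and moreover 2 − (3 + e^{−2})²/8 ≥ 0.77. -/
/-- Under heavy traffic `λ_p d₂ ≥ 1`, with `λ₂ = (1 − e^{−2λ_p d₂})/(2d₂)`,
`2 − (2 − λ₂d₂)²/2 ≥ 2 − (3 + e^{−2})²/8` and `2 − (3 + e^{−2})²/8 ≥ 0.77`. -/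
theorem heavy_traffic_cumulative_bound (lp d₂ : ℝ) (hlp : 0 < lp) (hd : 0 < d₂)
    (hheavy : 1 ≤ lp * d₂) (l2 : ℝ)
    (hl2 : l2 = (1 - Real.exp (-(2 * lp * d₂))) / (2 * d₂)) :
    2 - (2 - l2 * d₂) ^ 2 / 2 ≥ 2 - (3 + Real.exp (-2)) ^ 2 / 8 ∧
    2 - (3 + Real.exp (-2)) ^ 2 / 8 ≥ 0.77 := by
  have hld : l2 * d₂ = (1 - Real.exp (-(2 * lp * d₂))) / 2 := by
    rw [hl2]; field_simp
  have hexp_le : Real.exp (-(2 * lp * d₂)) ≤ Real.exp (-2) := by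
    apply Real.exp_le_exp.mpr; linarith
  have hexp_pos : 0 < Real.exp (-(2 * lp * d₂)) := Real.exp_pos _
  have hle : 2 - l2 * d₂ ≤ (3 + Real.exp (-2)) / 2 := by
    rw [hld]; linarith
  have hnn : 0 ≤ 2 - l2 * d₂ := by rw [hld]; nlinarith [Real.exp_pos (-2)]
  have hsq : (2 - l2 * d₂) ^ 2 ≤ ((3 + Real.exp (-2)) / 2) ^ 2 :=
    pow_le_pow_left₀ hnn hle 2
  have he2 : Real.exp (-2) ≤ 0.1368 := by
    have h1 : (2.7182818283 : ℝ) < Real.exp 1 := Real.exp_one_gt_d9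
    have h2 : Real.exp (-2) = 1 / (Real.exp 1 * Real.exp 1) := by
      rw [Real.exp_neg]; norm_num [← Real.exp_add]
    rw [h2]
    rw [div_le_iff₀ (by positivity)]
    nlinarith
  constructor
  · nlinarith
  · nlinarith [Real.exp_pos (-2)]
end

section
/- Let λ_p > 0 and d₂ > 0 satisfy λ_p d₂ ≥ 1. Set λ₂ = (1 − e^{−2 λ_p d₂})/(2 d₂) and λ_r = ln( 2 / ((λ₂d₂ − 2)² − 2) ) / (2 d₂). Define f : (0,∞) → ℝ by f(r) = λ₂ for 0 < r ≤ d₂; f(r) = λ₂ (1 − λ₂ (r − d₂)) for d₂ < r ≤ 2d₂; and f(r) = λ_r e^{−λ_r r} for r > 2d₂. Then f is nonnegative on (0,∞) and ∫₀^∞ f(r) dr = 1; that is, f is a probability density function. -/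
open MeasureTheory

lemma exp_tail_integral' (a b : ℝ) (hb : 0 < b) :
    ∫ x in Set.Ioi a, b * Real.exp (-(b * x)) = Real.exp (-(b * a)) := by
  have hd : ∀ x ∈ Set.Ici a,
      HasDerivAt (fun x => -Real.exp (-(b * x))) (b * Real.exp (-(b * x))) x := by
    intro x _
    have h1 : HasDerivAt (fun x : ℝ => -(b * x)) (-b) x := by
      exact ((hasDerivAt_id x).const_mul b).neg.congr_deriv (by ring)
    have := (h1.exp).neg
    refine this.congr_deriv ?_
    ring
  have hint : IntegrableOn (fun x => b * Real.exp (-(b * x))) (Set.Ioi a) := by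
    have := (exp_neg_integrableOn_Ioi a hb).const_mul b
    simpa [neg_mul, IntegrableOn] using this
  have harg : Filter.Tendsto (fun x : ℝ => -(b * x)) Filter.atTop Filter.atBot := by
    have := Filter.tendsto_id.const_mul_atTop_of_neg (show -b < 0 by linarith)
    refine this.congr fun x => by simp [neg_mul]
  have htend : Filter.Tendsto (fun x => -Real.exp (-(b * x))) Filter.atTop (nhds 0) := by
    have := (Real.tendsto_exp_atBot.comp harg).neg
    simpa using this
  have := integral_Ioi_of_hasDerivAt_of_tendsto' hd hint htend
  rw [this]; ring

/-- Under heavy traffic `λ_p d₂ ≥ 1`, with `λ₂ = (1 − e^{−2λ_p d₂})/(2d₂)` and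
`λ_r = ln(2/((λ₂d₂ − 2)² − 2))/(2d₂)`, the piecewise function
`f(r) = λ₂` on `(0, d₂]`, `f(r) = λ₂(1 − λ₂(r − d₂))` on `(d₂, 2d₂]`,
`f(r) = λ_r e^{−λ_r r}` on `(2d₂, ∞)` is nonnegative on `(0,∞)` and integrates to `1`;
that is, it is a probability density function. -/
theorem piecewise_nearest_vehicle_density_is_pdf (lp d₂ : ℝ) (hlp : 0 < lp) (hd : 0 < d₂)
    (hheavy : 1 ≤ lp * d₂) (l2 lr : ℝ)
    (hl2 : l2 = (1 - Real.exp (-(2 * lp * d₂))) / (2 * d₂))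
    (hlr : lr = Real.log (2 / ((l2 * d₂ - 2) ^ 2 - 2)) / (2 * d₂))
    (f : ℝ → ℝ)
    (hf1 : ∀ r : ℝ, 0 < r → r ≤ d₂ → f r = l2)
    (hf2 : ∀ r : ℝ, d₂ < r → r ≤ 2 * d₂ → f r = l2 * (1 - l2 * (r - d₂)))
    (hf3 : ∀ r : ℝ, 2 * d₂ < r → f r = lr * Real.exp (-(lr * r))) :
    (∀ r ∈ Set.Ioi (0:ℝ), 0 ≤ f r) ∧ (∫ r in Set.Ioi (0:ℝ), f r) = 1 := by
  have h2d : (0:ℝ) < 2 * d₂ := by linarith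
  have hE : 0 < Real.exp (-(2 * lp * d₂)) := Real.exp_pos _
  have hE1 : Real.exp (-(2 * lp * d₂)) < 1 := by
    rw [Real.exp_lt_one_iff]; nlinarith
  have hl2pos : 0 < l2 := by rw [hl2]; exact div_pos (by linarith) h2d
  have hkey : l2 * d₂ = (1 - Real.exp (-(2 * lp * d₂))) / 2 := by
    rw [hl2]; field_simp
  set a := l2 * d₂ with ha
  have ha0 : 0 < a := mul_pos hl2pos hd
  have ha1 : a < 1/2 := by rw [hkey]; linarith
  set t := (a - 2)^2 - 2 with htdef
  have ht0 : 0 < t := by rw [htdef]; nlinarith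
  have ht2 : t < 2 := by rw [htdef]; nlinarith
  have hlrpos : 0 < lr := by
    rw [hlr]
    apply div_pos _ h2d
    apply Real.log_pos
    rw [lt_div_iff₀ ht0]; linarith
  have hexp2 : Real.exp (-(lr * (2 * d₂))) = t / 2 := by
    have hlog : lr * (2 * d₂) = Real.log (2 / t) := by
      rw [hlr]; field_simp
    rw [hlog, Real.exp_neg, Real.exp_log (div_pos two_pos ht0), inv_div]
  constructor
  · intro r hr
    rcases le_or_gt r d₂ with h | h
    · rw [hf1 r hr h]; linarith
    rcases le_or_gt r (2 * d₂) with h' | h'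
    · rw [hf2 r h h']
      have hle : l2 * (r - d₂) ≤ a := by
        rw [ha]
        exact mul_le_mul_of_nonneg_left (by linarith) hl2pos.le
      nlinarith
    · rw [hf3 r h']; positivity
  · have hi1 : IntegrableOn f (Set.Ioc 0 d₂) := by
      have hc : IntegrableOn (fun _ : ℝ => l2) (Set.Ioc 0 d₂) :=
        integrableOn_const measure_Ioc_lt_top.ne
      exact hc.congr_fun (fun x hx => (hf1 x hx.1 hx.2).symm) measurableSet_Ioc
    have hi2 : IntegrableOn f (Set.Ioc d₂ (2 * d₂)) := by
      refine (Continuous.integrableOn_Ioc (by continuity :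
        Continuous fun x : ℝ => l2 * (1 - l2 * (x - d₂)))).congr_fun
        (fun x hx => ?_) measurableSet_Ioc
      exact (hf2 x hx.1 hx.2).symm
    have hi3 : IntegrableOn f (Set.Ioi (2 * d₂)) := by
      have hbase : IntegrableOn (fun x => lr * Real.exp (-(lr * x))) (Set.Ioi (2 * d₂)) := by
        have := (exp_neg_integrableOn_Ioi (2 * d₂) hlrpos).const_mul lr
        simpa [neg_mul, IntegrableOn] using this
      exact hbase.congr_fun (fun x hx => (hf3 x hx).symm) measurableSet_Ioi
    have hsplit : Set.Ioi (0:ℝ) = Set.Ioc 0 d₂ ∪ (Set.Ioc d₂ (2 * d₂) ∪ Set.Ioi (2 * d₂)) := by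
      rw [Set.Ioc_union_Ioi_eq_Ioi (by linarith : d₂ ≤ 2 * d₂),
        Set.Ioc_union_Ioi_eq_Ioi hd.le]
    have hdisj2 : Disjoint (Set.Ioc d₂ (2 * d₂)) (Set.Ioi (2 * d₂)) := by
      rw [Set.disjoint_left]
      rintro x ⟨_, h2⟩ h3
      exact absurd (Set.mem_Ioi.mp h3) (not_lt.mpr h2)
    have hdisj1 : Disjoint (Set.Ioc 0 d₂) (Set.Ioc d₂ (2 * d₂) ∪ Set.Ioi (2 * d₂)) := by
      rw [Set.disjoint_left]
      rintro x ⟨_, h2⟩ (⟨h3, _⟩ | h3)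
      · linarith
      · have := Set.mem_Ioi.mp h3; linarith
    rw [hsplit, setIntegral_union hdisj1 (measurableSet_Ioc.union measurableSet_Ioi) hi1
        (hi2.union hi3), setIntegral_union hdisj2 measurableSet_Ioi hi2 hi3]
    have e1 : ∫ r in Set.Ioc (0:ℝ) d₂, f r = a := by
      rw [setIntegral_congr_fun measurableSet_Ioc (fun x hx => hf1 x hx.1 hx.2),
        setIntegral_const, measureReal_def, Real.volume_Ioc]
      rw [ENNReal.toReal_ofReal (by linarith), smul_eq_mul, ha]
      ring
    have e2 : ∫ r in Set.Ioc d₂ (2 * d₂), f r = a - a ^ 2 / 2 := by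
      rw [setIntegral_congr_fun measurableSet_Ioc (fun x hx => hf2 x hx.1 hx.2),
        ← intervalIntegral.integral_of_le (by linarith : d₂ ≤ 2 * d₂)]
      have expand : (fun x : ℝ => l2 * (1 - l2 * (x - d₂)))
          = fun x => (l2 + l2 ^ 2 * d₂) - l2 ^ 2 * x := funext fun x => by ring
      rw [expand, intervalIntegral.integral_sub intervalIntegrable_const
        ((intervalIntegral.intervalIntegrable_id).const_mul _),
        intervalIntegral.integral_const, intervalIntegral.integral_const_mul,
        integral_id, smul_eq_mul, ha]
      ring
    have e3 : ∫ r in Set.Ioi (2 * d₂), f r = t / 2 := by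
      rw [setIntegral_congr_fun measurableSet_Ioi (fun x hx => hf3 x hx),
        exp_tail_integral' _ _ hlrpos, hexp2]
    rw [e1, e2, e3, htdef]
    ring
end
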